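/- For every ψ ∈ C₀¹(ℝ²), with Ω = {x < 0, t > 0} and P = {x = 0, t ≥ 0}: ∫_Ω ∂_tψ dx dt + ∫_Ω ∂_xψ dx dt − ∫₀^∞ 1·ψ(t,0) dt + ∫_{-∞}^0 1·ψ(0,x) dx = 0. In other words, m = 𝟙_Ω𝓛², n = 𝟙_Ω𝓛², ℘ = 0, w_p ≡ 1 satisfy the weak momentum balance ⟨m, ∂_tψ⟩ + ⟨n + ℘, ∂_xψ⟩ − ⟨w_p δ_P, ψ⟩ + ∫_{-∞}^0 ρ₀u₀ ψ(0,x) dx = 0 with ρ₀u₀ = 1. -/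

import Mathlib

open MeasureTheory

private lemma slice_left_support (ψ : ℝ × ℝ → ℝ) (hψc : HasCompactSupport ψ) (x : ℝ) :
    HasCompactSupport (fun s => ψ (s, x)) := by
  apply HasCompactSupport.intro (hψc.image continuous_fst)
  intro s hs
  by_contra h
  exact hs ⟨(s, x), subset_tsupport ψ h, rfl⟩

private lemma slice_right_support (ψ : ℝ × ℝ → ℝ) (hψc : HasCompactSupport ψ) (t : ℝ) :
    HasCompactSupport (fun y => ψ (t, y)) := by
  apply HasCompactSupport.intro (hψc.image continuous_snd)
  intro y hy
  by_contra h
  exact hy ⟨(t, y), subset_tsupport ψ h, rfl⟩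

private lemma slice_left_contDiff (ψ : ℝ × ℝ → ℝ) (hψ : ContDiff ℝ 1 ψ) (x : ℝ) :
    ContDiff ℝ 1 (fun s => ψ (s, x)) :=
  hψ.comp (contDiff_id.prodMk contDiff_const)

private lemma slice_right_contDiff (ψ : ℝ × ℝ → ℝ) (hψ : ContDiff ℝ 1 ψ) (t : ℝ) :
    ContDiff ℝ 1 (fun y => ψ (t, y)) :=
  hψ.comp (contDiff_const.prodMk contDiff_id)

theorem stmt_18 (ψ : ℝ × ℝ → ℝ) (hψ : ContDiff ℝ 1 ψ)
    (hψc : HasCompactSupport ψ) :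
    (∫ t in Set.Ioi (0:ℝ), ∫ x in Set.Iio (0:ℝ), deriv (fun s => ψ (s, x)) t) +
    (∫ t in Set.Ioi (0:ℝ), ∫ x in Set.Iio (0:ℝ), deriv (fun y => ψ (t, y)) x) -
    (∫ t in Set.Ioi (0:ℝ), (1:ℝ) * ψ (t, 0)) +
    (∫ x in Set.Iio (0:ℝ), (1:ℝ) * ψ (0, x)) = 0 := by
  -- second term: inner integral is ψ (t, 0)
  have h2 : (∫ t in Set.Ioi (0:ℝ), ∫ x in Set.Iio (0:ℝ), deriv (fun y => ψ (t, y)) x)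
      = ∫ t in Set.Ioi (0:ℝ), ψ (t, 0) := by
    refine setIntegral_congr_fun measurableSet_Ioi (fun t _ => ?_)
    have h1d := slice_right_contDiff ψ hψ t
    have h1c := slice_right_support ψ hψc t
    rw [setIntegral_congr_set Iio_ae_eq_Iic,
      HasCompactSupport.integral_Iic_deriv_eq h1d h1c 0]
  -- the x-derivative slice identity (for the first term, after Fubini)
  have hderiv_t : ∀ t x : ℝ, deriv (fun s => ψ (s, x)) t = fderiv ℝ ψ (t, x) (1, 0) := by
    intro t x
    have hd : HasDerivAt (fun s => ψ (s, x)) (fderiv ℝ ψ (t, x) (1, 0)) t := by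
      have hg : HasDerivAt (fun s : ℝ => (s, x)) ((1 : ℝ), (0 : ℝ)) t :=
        (hasDerivAt_id t).prodMk (hasDerivAt_const t x)
      exact ((hψ.differentiable one_ne_zero (t, x)).hasFDerivAt.comp_hasDerivAt t hg)
    exact hd.deriv
  -- integrability of (t,x) ↦ ∂ₜψ(t,x) on the product
  set F : ℝ × ℝ → ℝ := fun p => fderiv ℝ ψ p (1, 0) with hF
  have hFc : Continuous F := by
    have := (hψ.fderiv_right (m := 0) le_rfl).continuous
    exact this.clm_apply continuous_const
  have hFs : HasCompactSupport F := by
    apply HasCompactSupport.intro (hψc.fderiv ℝ)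
    intro p hp
    have : fderiv ℝ ψ p = 0 := image_eq_zero_of_notMem_tsupport hp
    simp [hF, this]
  have hFint : Integrable F (volume.prod volume) := by
    have h0 : Integrable F (volume : Measure (ℝ × ℝ)) :=
      hFc.integrable_of_hasCompactSupport hFs
    simpa [Measure.volume_eq_prod] using h0
  have hFint' : Integrable (Function.uncurry fun t x => F (t, x))
      ((volume.restrict (Set.Ioi (0:ℝ))).prod (volume.restrict (Set.Iio (0:ℝ)))) := by
    rw [Measure.prod_restrict]
    exact (hFint.restrict)
  -- first term: swap and integrate in t
  have h1 : (∫ t in Set.Ioi (0:ℝ), ∫ x in Set.Iio (0:ℝ), deriv (fun s => ψ (s, x)) t)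
      = ∫ x in Set.Iio (0:ℝ), (- ψ (0, x)) := by
    have hcong : (∫ t in Set.Ioi (0:ℝ), ∫ x in Set.Iio (0:ℝ), deriv (fun s => ψ (s, x)) t)
        = ∫ t in Set.Ioi (0:ℝ), ∫ x in Set.Iio (0:ℝ), F (t, x) := by
      refine setIntegral_congr_fun measurableSet_Ioi (fun t _ => ?_)
      refine setIntegral_congr_fun measurableSet_Iio (fun x _ => ?_)
      exact hderiv_t t x
    rw [hcong, integral_integral_swap hFint']
    refine setIntegral_congr_fun measurableSet_Iio (fun x _ => ?_)
    have h1d := slice_left_contDiff ψ hψ x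
    have h1c := slice_left_support ψ hψc x
    have : (∫ t in Set.Ioi (0:ℝ), F (t, x))
        = ∫ t in Set.Ioi (0:ℝ), deriv (fun s => ψ (s, x)) t := by
      refine setIntegral_congr_fun measurableSet_Ioi (fun t _ => ?_)
      exact (hderiv_t t x).symm
    rw [this, HasCompactSupport.integral_Ioi_deriv_eq h1d h1c 0]
  rw [h1, h2]
  simp [integral_neg]
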